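/- For any (k,n)-bounded affine permutation f and any d ≥ 1, the cyclic Demazure crystal B_f(dω_k) is nonempty; in fact it contains the tableaux T_{I_1},...,T_{I_n} associated to the Grassmann necklace of f. -/

import Mathlib

/-- `T` is a semistandard Young tableau of rectangular shape with `k` rows and `d`
columns, with entries in `{1,…,n}`: rows weakly increase, columns strictly increase.
(The values of `T` outside the rectangle are irrelevant.) -/
def IsSSYT (k d n : ℕ) (T : ℕ → ℕ → ℕ) : Prop :=
  (∀ r c, r < k → c < d → 1 ≤ T r c ∧ T r c ≤ n) ∧
  (∀ r c, r < k → c + 1 < d → T r c ≤ T r (c + 1)) ∧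
  (∀ r c, r + 1 < k → c < d → T r c < T (r + 1) c)

/-- A cell `(r,c)` of a tableau with `k` rows is *free* for the Bender–Knuth toggle `t_i`:
an entry `i` is free if the cell directly below does not contain `i+1`, and an entry
`i+1` is free if the cell directly above does not contain `i`. -/
def bkFree (k i : ℕ) (T : ℕ → ℕ → ℕ) (r c : ℕ) : Prop :=
  (T r c = i ∧ (r + 1 = k ∨ T (r + 1) c ≠ i + 1)) ∨
  (T r c = i + 1 ∧ (r = 0 ∨ T (r - 1) c ≠ i))

open Classical in
/-- The Bender–Knuth involution `t_i` on (the rectangle `k × d` of) a tableau: in each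
row, if the free entries consist of `a` letters `i` followed by `b` letters `i+1`,
replace them by `b` letters `i` followed by `a` letters `i+1`. -/
noncomputable def bk (k d i : ℕ) (T : ℕ → ℕ → ℕ) : ℕ → ℕ → ℕ := fun r c =>
  let F := (Finset.range d).filter fun c' => bkFree k i T r c'
  if c ∈ F then
    if (F.filter fun c' => c' < c).card < (F.filter fun c' => T r c' = i + 1).card
    then i else i + 1
  else T r c

/-- Promotion `χ` on semistandard tableaux with entries in `{1,…,n}`, computed as the
composite of Bender–Knuth involutions `t_1 ∘ t_2 ∘ ⋯ ∘ t_{n-1}`.  This is the standard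
equivalent description of jeu-de-taquin promotion (delete the `n`'s, slide the remaining
entries to the bottom right, add one to every entry, fill the vacated boxes with `1`'s). -/
noncomputable def promo (k d n : ℕ) (T : ℕ → ℕ → ℕ) : ℕ → ℕ → ℕ :=
  (((List.range (n - 1)).map (· + 1)).foldr (fun i acc => bk k d i acc) T)

/-- A `(k,n)`-bounded affine permutation: a bijection `f : ℤ → ℤ` with
`f(i+n) = f(i) + n`, `∑_{i=1}^n f(i) = C(n+1,2) + kn`, and `i ≤ f(i) ≤ i + n`. -/
def IsBAP (k n : ℕ) (f : ℤ → ℤ) : Prop :=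
  Function.Bijective f ∧ (∀ i, f (i + n) = f i + n) ∧
  (∑ i ∈ Finset.Icc (1 : ℤ) (n : ℤ), f i) = ((n + 1).choose 2 : ℤ) + (k : ℤ) * n ∧
  ∀ i, i ≤ f i ∧ f i ≤ i + n

/-- The representative in `{1,…,n}` of an integer modulo `n`. -/
def res (n : ℕ) (x : ℤ) : ℕ := ((x - 1) % (n : ℤ) + 1).toNat

/-- The Grassmann necklace of `f`: `I_a = { f(b) mod n : b < a, f(b) ≥ a }` with
representatives taken in `{1,…,n}` (only `b ∈ [a-n, a-1]` can contribute, by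
boundedness). -/
noncomputable def necklaceOf (n : ℕ) (f : ℤ → ℤ) : ℕ → Finset ℕ := fun a =>
  ((Finset.Icc ((a : ℤ) - n) ((a : ℤ) - 1)).filter fun b => (a : ℤ) ≤ f b).image
    fun b => res n (f b)

/-- Normalization of a tableau: set all values outside the `k × d` rectangle to `0`. -/
def normTab (k d : ℕ) (T : ℕ → ℕ → ℕ) : ℕ → ℕ → ℕ := fun r c =>
  if r < k ∧ c < d then T r c else 0

/-- Promotion followed by normalization outside the rectangle. -/
noncomputable def promoN (k d n : ℕ) : (ℕ → ℕ → ℕ) → (ℕ → ℕ → ℕ) := fun T =>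
  normTab k d (promo k d n T)

/-- The cyclic rotation `χ` on subsets of `{1,…,n}`: add `1` mod `n` to each element. -/
def shiftSet (n : ℕ) (S : Finset ℕ) : Finset ℕ := S.image fun x => x % n + 1

/-- The tableau `T_I` of shape `d^k` whose `r`-th row is filled with the `r`-th smallest
element of `I` (normalized to `0` outside the rectangle). -/
def tabOf (k d : ℕ) (I : Finset ℕ) : ℕ → ℕ → ℕ := fun r c =>
  if r < k ∧ c < d then (I.sort (· ≤ ·)).getD r 0 else 0

/-- The Demazure crystal `B_I(dω_k)`: normalized semistandard tableaux of shape `d^k`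
with entries in `{1,…,n}` which are entry-wise `≥ T_I`. -/
def BIset (k d n : ℕ) (I : Finset ℕ) : Set (ℕ → ℕ → ℕ) :=
  {T | IsSSYT k d n T ∧ (∀ r c, r < k → c < d → tabOf k d I r c ≤ T r c) ∧
    ∀ r c, ¬(r < k ∧ c < d) → T r c = 0}

/-- The cyclic Demazure crystal
`B_f(dω_k) = ⋂_{a=1}^n χ^{a-1}(B_{χ^{1-a}(I_a)}(dω_k))`, where `(I_1,…,I_n)` is the
Grassmann necklace of `f`, `χ` acts on tableaux by promotion and on subsets by cyclic
rotation (and `χ^{1-a} = χ^{n+1-a}`). -/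
noncomputable def cyclicDemazure (k d n : ℕ) (f : ℤ → ℤ) : Set (ℕ → ℕ → ℕ) :=
  ⋂ a ∈ Finset.Icc 1 n, (promoN k d n)^[a - 1] ''
    BIset k d n ((shiftSet n)^[n + 1 - a] (necklaceOf n f a))



lemma res_cast {n : ℕ} (hn : 0 < n) (x : ℤ) :
    ((res n x : ℤ)) = (x - 1) % (n : ℤ) + 1 := by
  have h0 : (0:ℤ) ≤ (x - 1) % (n : ℤ) := Int.emod_nonneg _ (by positivity)
  simp only [res]
  omega

lemma res_mem {n : ℕ} (hn : 0 < n) (x : ℤ) : 1 ≤ res n x ∧ res n x ≤ n := by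
  have h0 : (0:ℤ) ≤ (x - 1) % (n : ℤ) := Int.emod_nonneg _ (by positivity)
  have h1 : (x - 1) % (n : ℤ) < n := Int.emod_lt_of_pos _ (by exact_mod_cast hn)
  have := res_cast hn x
  constructor <;> omega

lemma res_congr {n : ℕ} {x y : ℤ} (h : (n:ℤ) ∣ (x - y)) : res n x = res n y := by
  unfold res
  have : (x - 1) % (n:ℤ) = (y - 1) % (n:ℤ) :=
    Int.ModEq.symm (Int.modEq_iff_dvd.mpr (by simpa using h))
  rw [this]

lemma res_self_mod {n : ℕ} (hn : 0 < n) (x : ℤ) : (n:ℤ) ∣ ((res n x : ℤ) - x) := by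
  rw [res_cast hn]
  have := Int.emod_emod_of_dvd (x-1) (dvd_refl (n:ℤ))
  have h2 : (x - 1) % (n:ℤ) - (x - 1) = -((n:ℤ) * ((x-1) / n)) := by
    rw [Int.emod_def]; ring
  have : (n:ℤ) ∣ ((x - 1) % (n:ℤ) - (x - 1)) := h2 ▸ (dvd_neg.mpr ⟨(x-1)/n, rfl⟩)
  have h3 : (x - 1) % (n:ℤ) + 1 - x = (x - 1) % (n:ℤ) - (x - 1) := by ring
  rw [h3]; exact this

lemma res_eq_self {n : ℕ} (hn : 0 < n) {x : ℤ} (h1 : 1 ≤ x) (h2 : x ≤ n) :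
    (res n x : ℤ) = x := by
  rw [res_cast hn]
  rw [Int.emod_eq_of_lt (by omega) (by omega)]
  ring

lemma res_inj_window {n : ℕ} (hn : 0 < n) {c x y : ℤ} (hx1 : c ≤ x) (hx2 : x < c + n)
    (hy1 : c ≤ y) (hy2 : y < c + n) (h : res n x = res n y) : x = y := by
  have hx := res_self_mod hn x
  have hy := res_self_mod hn y
  have : (n:ℤ) ∣ (x - y) := by
    have : (x - y) = ((res n y : ℤ) - y) - ((res n x : ℤ) - x) := by rw [h]; ring
    rw [this]; exact dvd_sub hy hx
  obtain ⟨c', hc'⟩ := this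
  have hnz : (0:ℤ) < n := by positivity
  rcases lt_trichotomy c' 0 with h' | h' | h'
  · nlinarith
  · simp [h'] at hc'; omega
  · nlinarith

lemma res_add_n {n : ℕ} (x : ℤ) : res n (x + n) = res n x :=
  res_congr ⟨1, by ring⟩

noncomputable def sv (V : Finset ℕ) (r : ℕ) : ℕ := (V.sort (· ≤ ·)).getD r 0

lemma sv_eq_getElem {V : Finset ℕ} {r : ℕ} (h : r < (V.sort (· ≤ ·)).length) :
    sv V r = (V.sort (· ≤ ·))[r] := by
  rw [sv, List.getD_eq_getElem _ 0 h]

lemma sv_mem {V : Finset ℕ} {k r : ℕ} (hcard : V.card = k) (hr : r < k) : sv V r ∈ V := by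
  have hl : (V.sort (· ≤ ·)).length = k := by rw [Finset.length_sort, hcard]
  rw [sv_eq_getElem (by omega)]
  exact (Finset.mem_sort _).mp (List.getElem_mem _)

lemma sv_surj {V : Finset ℕ} {k : ℕ} (hcard : V.card = k) {x : ℕ} (hx : x ∈ V) :
    ∃ r, r < k ∧ sv V r = x := by
  have hl : (V.sort (· ≤ ·)).length = k := by rw [Finset.length_sort, hcard]
  have : x ∈ V.sort (· ≤ ·) := (Finset.mem_sort _).mpr hx
  obtain ⟨i, hi, hget⟩ := List.mem_iff_getElem.mp this
  exact ⟨i, by omega, by rw [sv_eq_getElem hi]; exact hget⟩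

lemma sv_strictMono {V : Finset ℕ} {k r s : ℕ} (hcard : V.card = k) (hrs : r < s)
    (hs : s < k) : sv V r < sv V s := by
  have hl : (V.sort (· ≤ ·)).length = k := by rw [Finset.length_sort, hcard]
  have h := (Finset.sortedLT_sort V)
    (show (⟨r, by omega⟩ : Fin _) < ⟨s, by omega⟩ from hrs)
  rw [sv_eq_getElem (by omega : r < _), sv_eq_getElem (by omega : s < _)]
  simpa using h

lemma sort_eq_of_enum {V : Finset ℕ} {k : ℕ} (w : ℕ → ℕ)
    (hmono : ∀ r s, r < s → s < k → w r < w s)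
    (hmem : ∀ x, x ∈ V ↔ ∃ r, r < k ∧ w r = x) :
    V.sort (· ≤ ·) = (List.range k).map w := by
  have hsort' : ((List.range k).map w).Pairwise (· < ·) := by
    rw [List.pairwise_map]
    exact List.Pairwise.imp_of_mem (by
      intro a b ha hb hab
      exact hmono a b hab (List.mem_range.mp hb)) (List.pairwise_lt_range (n := k))
  have hnd : ((List.range k).map w).Nodup := hsort'.nodup
  have hperm : (V.sort (· ≤ ·)).Perm ((List.range k).map w) := by
    apply List.perm_of_nodup_nodup_toFinset_eq (Finset.sort_nodup _ _) hnd
    rw [Finset.sort_toFinset]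
    ext x
    simp only [List.mem_toFinset, List.mem_map, List.mem_range, hmem]
  have : IsAntisymm ℕ (· < ·) := ⟨fun a b h1 h2 => absurd h2 (not_lt_of_gt h1)⟩
  exact (Finset.sortedLT_sort V).eq_of_mem_iff (List.sortedLT_iff_pairwise.mpr hsort') (fun a => hperm.mem_iff)

lemma sv_of_enum {V : Finset ℕ} {k : ℕ} (w : ℕ → ℕ)
    (hmono : ∀ r s, r < s → s < k → w r < w s)
    (hmem : ∀ x, x ∈ V ↔ ∃ r, r < k ∧ w r = x) :
    V.card = k ∧ ∀ r, r < k → sv V r = w r := by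
  have h := sort_eq_of_enum w hmono hmem
  have hlen : (V.sort (· ≤ ·)).length = k := by rw [h]; simp
  refine ⟨by rw [← Finset.length_sort (· ≤ ·) (s := V), hlen], fun r hr => ?_⟩
  rw [sv_eq_getElem (by omega)]
  simp [h]

open Classical in
noncomputable def swf (i : ℕ) (V : Finset ℕ) : ℕ → ℕ := fun x =>
  if (i ∈ V ↔ i+1 ∈ V) then x else if x = i then i+1 else if x = i+1 then i else x

lemma swf_of_ne {i : ℕ} {V : Finset ℕ} {x : ℕ} (h1 : x ≠ i) (h2 : x ≠ i+1) :
    swf i V x = x := by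
  unfold swf; split_ifs <;> simp_all

lemma swf_of_iff {i : ℕ} {V : Finset ℕ} (h : i ∈ V ↔ i+1 ∈ V) (x : ℕ) :
    swf i V x = x := by
  unfold swf; rw [if_pos h]

lemma swf_active₁ {i : ℕ} {V : Finset ℕ} (h1 : i ∈ V) (h2 : i+1 ∉ V) :
    swf i V i = i+1 := by
  unfold swf; rw [if_neg (by tauto), if_pos rfl]

lemma swf_active₂ {i : ℕ} {V : Finset ℕ} (h1 : i ∉ V) (h2 : i+1 ∈ V) :
    swf i V (i+1) = i := by
  unfold swf; rw [if_neg (by tauto), if_neg (by omega), if_pos rfl]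

lemma swf_image_subset {i n : ℕ} {V : Finset ℕ} (hi : 1 ≤ i) (hin : i + 1 ≤ n)
    (hV : V ⊆ Finset.Icc 1 n) : V.image (swf i V) ⊆ Finset.Icc 1 n := by
  intro x hx
  obtain ⟨y, hy, rfl⟩ := Finset.mem_image.mp hx
  have hy' := Finset.mem_Icc.mp (hV hy)
  unfold swf
  split_ifs <;> rw [Finset.mem_Icc] <;> omega

lemma swf_enum {k i : ℕ} {V : Finset ℕ} (hcard : V.card = k) :
    (V.image (swf i V)).card = k ∧
      ∀ r, r < k → sv (V.image (swf i V)) r = swf i V (sv V r) := by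
  apply sv_of_enum
  · intro r s hrs hs
    have hvr := sv_strictMono hcard hrs hs
    by_cases hiff : (i ∈ V ↔ i+1 ∈ V)
    · rw [swf_of_iff hiff, swf_of_iff hiff]; exact hvr
    · by_cases h1 : i ∈ V
      · have h2 : i+1 ∉ V := fun h => hiff ⟨fun _ => h, fun _ => h1⟩
        have hne_r : sv V r ≠ i+1 := fun h => h2 (h ▸ sv_mem hcard (lt_trans hrs hs))
        have hne_s : sv V s ≠ i+1 := fun h => h2 (h ▸ sv_mem hcard hs)
        by_cases hr' : sv V r = i
        · rw [hr', swf_active₁ h1 h2, swf_of_ne (by omega) hne_s]; omega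
        · rw [swf_of_ne hr' hne_r]
          by_cases hs' : sv V s = i
          · rw [hs', swf_active₁ h1 h2]; omega
          · rw [swf_of_ne hs' hne_s]; exact hvr
      · have h2 : i+1 ∈ V := by
          by_contra h; exact hiff ⟨fun hh => absurd hh h1, fun hh => absurd hh h⟩
        have hne_r : sv V r ≠ i := fun h => h1 (h ▸ sv_mem hcard (lt_trans hrs hs))
        have hne_s : sv V s ≠ i := fun h => h1 (h ▸ sv_mem hcard hs)
        by_cases hr' : sv V r = i+1
        · rw [hr', swf_active₂ h1 h2, swf_of_ne hne_s (by omega)]; omega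
        · rw [swf_of_ne hne_r hr']
          by_cases hs' : sv V s = i+1
          · rw [hs', swf_active₂ h1 h2]; omega
          · rw [swf_of_ne hne_s hs']; exact hvr
  · intro x
    constructor
    · intro hx
      obtain ⟨y, hy, hxy⟩ := Finset.mem_image.mp hx
      obtain ⟨r, hr, hsv⟩ := sv_surj hcard hy
      exact ⟨r, hr, by rw [hsv]; exact hxy⟩
    · rintro ⟨r, hr, h⟩
      exact Finset.mem_image.mpr ⟨sv V r, sv_mem hcard hr, h⟩

lemma tabOf_pos {k d : ℕ} {V : Finset ℕ} {r c : ℕ} (hr : r < k) (hc : c < d) :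
    tabOf k d V r c = sv V r := if_pos ⟨hr, hc⟩

lemma tabOf_neg {k d : ℕ} {V : Finset ℕ} {r c : ℕ} (h : ¬ (r < k ∧ c < d)) :
    tabOf k d V r c = 0 := if_neg h

lemma range_filter_lt {d c : ℕ} (hc : c ≤ d) :
    (Finset.range d).filter (fun c' => c' < c) = Finset.range c := by
  ext x; simp only [Finset.mem_filter, Finset.mem_range]; omega

lemma bk_tabOf {k d i : ℕ} (hi : 1 ≤ i) {V : Finset ℕ}
    (hcard : V.card = k) :
    bk k d i (tabOf k d V) = tabOf k d (V.image (swf i V)) := by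
  classical
  obtain ⟨hWcard, hWsv⟩ := swf_enum (i := i) hcard
  funext r c
  by_cases hrc : r < k ∧ c < d
  · obtain ⟨hr, hc⟩ := hrc
    rw [tabOf_pos (V := V.image (swf i V)) hr hc, hWsv r hr]
    have hTval : ∀ c', c' < d → tabOf k d V r c' = sv V r := fun c' hc' => tabOf_pos hr hc'
    simp only [bk]
    rcases Nat.lt_trichotomy (sv V r) i with hv | hv | hv
    · -- sv V r < i : not i, not i+1
      have hF : (Finset.range d).filter (fun c' => bkFree k i (tabOf k d V) r c') = ∅ := by
        apply Finset.filter_false_of_mem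
        intro c' hc'
        have h := hTval c' (Finset.mem_range.mp hc')
        intro hf; rcases hf with ⟨h1, _⟩ | ⟨h1, _⟩ <;> rw [h] at h1 <;> omega
      rw [hF, if_neg (Finset.notMem_empty c), hTval c hc,
        swf_of_ne (by omega) (by omega)]
    · -- sv V r = i
      have hfree_iff : ∀ c', c' < d →
          (bkFree k i (tabOf k d V) r c' ↔ i+1 ∉ V) := by
        intro c' hc'
        have hT := hTval c' hc'
        constructor
        · rintro (⟨h1, h2⟩ | ⟨h1, _⟩)
          · intro hmem
            obtain ⟨t, ht, hsvt⟩ := sv_surj hcard hmem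
            have htr : r < t := by
              rcases Nat.lt_trichotomy t r with h | h | h
              · have := sv_strictMono hcard h hr; omega
              · subst h; omega
              · exact h
            have ht1 : t = r + 1 := by
              by_contra hne
              have hr1 : r + 1 < t := by omega
              have ha := sv_strictMono hcard (by omega : r < r + 1) (by omega : r + 1 < k)
              have hb := sv_strictMono hcard hr1 ht
              omega
            rcases h2 with h2 | h2
            · omega
            · apply h2
              rw [tabOf_pos (by omega) hc', ← ht1, hsvt]
          · rw [hT] at h1; omega
        · intro hmem
          left
          refine ⟨by rw [hT, hv], ?_⟩
          by_cases hk : r + 1 = k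
          · exact Or.inl hk
          · right
            rw [tabOf_pos (by omega) hc']
            intro hcon
            exact hmem (hcon ▸ sv_mem hcard (by omega))
      have hiV : i ∈ V := hv ▸ sv_mem hcard hr
      by_cases hmem1 : i + 1 ∈ V
      · have hF : (Finset.range d).filter (fun c' => bkFree k i (tabOf k d V) r c') = ∅ := by
          apply Finset.filter_false_of_mem
          intro c' hc'
          rw [hfree_iff c' (Finset.mem_range.mp hc')]
          simp [hmem1]
        rw [hF, if_neg (Finset.notMem_empty c), hTval c hc,
          swf_of_iff ⟨fun _ => hmem1, fun _ => hiV⟩]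
      · have hF : (Finset.range d).filter (fun c' => bkFree k i (tabOf k d V) r c') =
            Finset.range d := by
          apply Finset.filter_true_of_mem
          intro c' hc'
          rw [hfree_iff c' (Finset.mem_range.mp hc')]
          exact hmem1
        rw [hF, if_pos (Finset.mem_range.mpr hc)]
        have hcnt : (Finset.range d).filter (fun c' => tabOf k d V r c' = i + 1) = ∅ := by
          apply Finset.filter_false_of_mem
          intro c' hc'
          rw [hTval c' (Finset.mem_range.mp hc')]
          omega
        rw [hcnt]
        rw [if_neg (by simp)]
        rw [hv, swf_active₁ hiV hmem1]
    · -- sv V r > i : check whether = i+1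
      by_cases hv1 : sv V r = i + 1
      · have hfree_iff : ∀ c', c' < d →
            (bkFree k i (tabOf k d V) r c' ↔ i ∉ V) := by
          intro c' hc'
          have hT := hTval c' hc'
          constructor
          · rintro (⟨h1, _⟩ | ⟨h1, h2⟩)
            · rw [hT] at h1; omega
            · intro hmem
              obtain ⟨t, ht, hsvt⟩ := sv_surj hcard hmem
              have htr : t < r := by
                rcases Nat.lt_trichotomy t r with h | h | h
                · exact h
                · subst h; omega
                · have := sv_strictMono hcard h ht; omega
              have ht1 : t = r - 1 := by
                by_contra hne
                have hr1 : t < r - 1 := by omega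
                have ha := sv_strictMono hcard hr1 (by omega : r - 1 < k)
                have hb := sv_strictMono hcard (by omega : r - 1 < r) hr
                omega
              rcases h2 with h2 | h2
              · omega
              · apply h2
                rw [tabOf_pos (by omega) hc', ← ht1, hsvt]
          · intro hmem
            right
            refine ⟨by rw [hT, hv1], ?_⟩
            by_cases hk : r = 0
            · exact Or.inl hk
            · right
              rw [tabOf_pos (by omega) hc']
              intro hcon
              exact hmem (hcon ▸ sv_mem hcard (by omega))
        have hi1V : i + 1 ∈ V := hv1 ▸ sv_mem hcard hr
        by_cases hmem1 : i ∈ V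
        · have hF : (Finset.range d).filter (fun c' => bkFree k i (tabOf k d V) r c') = ∅ := by
            apply Finset.filter_false_of_mem
            intro c' hc'
            rw [hfree_iff c' (Finset.mem_range.mp hc')]
            simp [hmem1]
          rw [hF, if_neg (Finset.notMem_empty c), hTval c hc,
            swf_of_iff ⟨fun _ => hi1V, fun _ => hmem1⟩]
        · have hF : (Finset.range d).filter (fun c' => bkFree k i (tabOf k d V) r c') =
              Finset.range d := by
            apply Finset.filter_true_of_mem
            intro c' hc'
            rw [hfree_iff c' (Finset.mem_range.mp hc')]
            exact hmem1
          rw [hF, if_pos (Finset.mem_range.mpr hc)]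
          have hcnt : (Finset.range d).filter (fun c' => tabOf k d V r c' = i + 1) =
              Finset.range d := by
            apply Finset.filter_true_of_mem
            intro c' hc'
            rw [hTval c' (Finset.mem_range.mp hc')]
            exact hv1
          rw [hcnt, range_filter_lt (le_of_lt hc), Finset.card_range, Finset.card_range,
            if_pos hc, hv1, swf_active₂ hmem1 hi1V]
      · -- sv V r > i+1 : not free
        have hF : (Finset.range d).filter (fun c' => bkFree k i (tabOf k d V) r c') = ∅ := by
          apply Finset.filter_false_of_mem
          intro c' hc'
          have h := hTval c' (Finset.mem_range.mp hc')
          intro hf; rcases hf with ⟨h1, _⟩ | ⟨h1, _⟩ <;> rw [h] at h1 <;> omega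
        rw [hF, if_neg (Finset.notMem_empty c), hTval c hc,
          swf_of_ne (by omega) (by omega)]
  · rw [tabOf_neg (V := V.image (swf i V)) hrc]
    simp only [bk]
    by_cases hc : c < d
    · have hrk : ¬ r < k := fun h => hrc ⟨h, hc⟩
      have hT0 : tabOf k d V r c = 0 := tabOf_neg (by tauto)
      have hfree : ¬ bkFree k i (tabOf k d V) r c := by
        intro hf
        rcases hf with ⟨h1, _⟩ | ⟨h1, _⟩ <;> rw [hT0] at h1 <;> omega
      have hnc : ¬ c ∈ (Finset.range d).filter (fun c' => bkFree k i (tabOf k d V) r c') := by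
        simp only [Finset.mem_filter]; tauto
      rw [if_neg hnc]
      exact hT0
    · rw [if_neg (fun hmem => hc (Finset.mem_range.mp (Finset.mem_filter.mp hmem).1))]
      exact tabOf_neg (by tauto)

def uf (n j x : ℕ) : ℕ := if x < j then x else if x < n then x + 1 else j

lemma uf_image_subset {n j : ℕ} (hj : 1 ≤ j) (hjn : j ≤ n) {V : Finset ℕ}
    (hV : V ⊆ Finset.Icc 1 n) : V.image (uf n j) ⊆ Finset.Icc 1 n := by
  intro x hx
  obtain ⟨y, hy, rfl⟩ := Finset.mem_image.mp hx
  have := Finset.mem_Icc.mp (hV hy)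
  unfold uf; split_ifs <;> rw [Finset.mem_Icc] <;> omega

lemma uf_image_card {n j k : ℕ} (hj : 1 ≤ j) (hjn : j ≤ n) {V : Finset ℕ}
    (hV : V ⊆ Finset.Icc 1 n) (hcard : V.card = k) : (V.image (uf n j)).card = k := by
  rw [← hcard]
  apply Finset.card_image_of_injOn
  intro x hx y hy h
  have hx' := Finset.mem_Icc.mp (hV hx)
  have hy' := Finset.mem_Icc.mp (hV hy)
  unfold uf at h; split_ifs at h <;> omega

lemma uf_agree {n j y : ℕ} (hj : 1 ≤ j) (hjn : j + 1 ≤ n) (hy1 : 1 ≤ y) (hy2 : y ≤ n)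
    (hyj : y ≠ j) (hyn : y ≠ n) : uf n (j+1) y = uf n j y := by
  unfold uf; split_ifs <;> omega

lemma uf_val_in {n j y : ℕ} (hjn : j + 1 ≤ n) (hy2 : y ≤ n) (hyj : y ≠ j) (hyn : y ≠ n) :
    uf n (j+1) y ≠ j ∧ uf n (j+1) y ≠ j + 1 := by
  unfold uf; split_ifs <;> omega

lemma mem_uf_j {n j : ℕ} (hj : 1 ≤ j) (hjn : j + 1 ≤ n) {V : Finset ℕ}
    (hV : V ⊆ Finset.Icc 1 n) : j ∈ V.image (uf n (j+1)) ↔ j ∈ V := by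
  constructor
  · intro h
    obtain ⟨y, hy, h⟩ := Finset.mem_image.mp h
    have hy' := Finset.mem_Icc.mp (hV hy)
    unfold uf at h
    split_ifs at h
    · subst h; exact hy
    · exfalso; omega
    · exfalso; omega
  · intro h
    exact Finset.mem_image.mpr ⟨j, h, by unfold uf; rw [if_pos (by omega)]⟩

lemma mem_uf_j1 {n j : ℕ} (hj : 1 ≤ j) (hjn : j + 1 ≤ n) {V : Finset ℕ}
    (hV : V ⊆ Finset.Icc 1 n) : j + 1 ∈ V.image (uf n (j+1)) ↔ n ∈ V := by
  constructor
  · intro h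
    obtain ⟨y, hy, h⟩ := Finset.mem_image.mp h
    have hy' := Finset.mem_Icc.mp (hV hy)
    unfold uf at h
    split_ifs at h
    · exfalso; omega
    · exfalso; omega
    · have hyn : y = n := by omega
      subst hyn; exact hy
  · intro h
    refine Finset.mem_image.mpr ⟨n, h, ?_⟩
    unfold uf; rw [if_neg (by omega), if_neg (by omega)]

lemma ustep {n j : ℕ} (hj : 1 ≤ j) (hjn : j + 1 ≤ n) {V : Finset ℕ}
    (hV : V ⊆ Finset.Icc 1 n) :
    (V.image (uf n (j+1))).image (swf j (V.image (uf n (j+1)))) = V.image (uf n j) := by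
  set W := V.image (uf n (j+1)) with hW
  have hjW : j ∈ W ↔ j ∈ V := mem_uf_j hj hjn hV
  have hj1W : (j + 1 ∈ W) ↔ n ∈ V := mem_uf_j1 hj hjn hV
  by_cases hjV : j ∈ V <;> by_cases hnV : n ∈ V
  · -- both: swf = id, W = V.image (uf n j) by ext
    have hiff : j ∈ W ↔ j + 1 ∈ W := by rw [hjW, hj1W]; exact ⟨fun _ => hnV, fun _ => hjV⟩
    rw [Finset.image_congr (fun x _ => swf_of_iff hiff x), Finset.image_id']
    rw [hW]
    ext x
    simp only [Finset.mem_image]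
    constructor
    · rintro ⟨y, hy, rfl⟩
      have hy' := Finset.mem_Icc.mp (hV hy)
      by_cases h1 : y = j
      · have hL : uf n j n = j := by
          unfold uf; rw [if_neg (by omega), if_neg (by omega)]
        have hR : uf n (j+1) y = j := by
          unfold uf; rw [if_pos (by omega)]; exact h1
        exact ⟨n, hnV, by rw [hL, hR]⟩
      · by_cases h2 : y = n
        · have hL : uf n j j = j + 1 := by
            unfold uf; rw [if_neg (by omega), if_pos (by omega)]
          have hR : uf n (j+1) y = j + 1 := by
            unfold uf; rw [if_neg (by omega), if_neg (by omega)]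
          exact ⟨j, hjV, by rw [hL, hR]⟩
        · exact ⟨y, hy, (uf_agree hj hjn (by omega) (by omega) h1 h2).symm⟩
    · rintro ⟨y, hy, rfl⟩
      have hy' := Finset.mem_Icc.mp (hV hy)
      by_cases h1 : y = j
      · have hL : uf n (j+1) n = j + 1 := by
          unfold uf; rw [if_neg (by omega), if_neg (by omega)]
        have hR : uf n j y = j + 1 := by
          unfold uf; rw [if_neg (by omega), if_pos (by omega)]; omega
        exact ⟨n, hnV, by rw [hL, hR]⟩
      · by_cases h2 : y = n
        · have hL : uf n (j+1) j = j := by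
            unfold uf; rw [if_pos (by omega)]
          have hR : uf n j y = j := by
            unfold uf; rw [if_neg (by omega), if_neg (by omega)]
          exact ⟨j, hjV, by rw [hL, hR]⟩
        · exact ⟨y, hy, uf_agree hj hjn (by omega) (by omega) h1 h2⟩
  · -- j ∈ V, n ∉ V : active swap, pointwise
    rw [Finset.image_image]
    apply Finset.image_congr
    intro y hy
    have hy' := Finset.mem_Icc.mp (hV hy)
    by_cases h1 : y = j
    · have hval : uf n (j+1) y = j := by
        unfold uf; rw [if_pos (by omega)]; exact h1
      simp only [Function.comp_apply, hval]
      rw [swf_active₁ (hjW.mpr hjV) (fun h => hnV (hj1W.mp h))]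
      unfold uf
      rw [if_neg (by omega), if_pos (by omega)]
      omega
    · have h2 : y ≠ n := fun h => hnV (h ▸ hy)
      obtain ⟨ha, hb⟩ := uf_val_in (j := j) hjn hy'.2 h1 h2
      simp only [Function.comp_apply]
      rw [swf_of_ne ha hb]
      exact uf_agree hj hjn (by omega) (by omega) h1 h2
  · -- j ∉ V, n ∈ V
    rw [Finset.image_image]
    apply Finset.image_congr
    intro y hy
    have hy' := Finset.mem_Icc.mp (hV hy)
    by_cases h2 : y = n
    · have hval : uf n (j+1) y = j + 1 := by
        unfold uf; rw [if_neg (by omega), if_neg (by omega)]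
      simp only [Function.comp_apply, hval]
      rw [swf_active₂ (fun h => hjV (hjW.mp h)) (hj1W.mpr hnV)]
      unfold uf
      rw [if_neg (by omega), if_neg (by omega)]
    · have h1 : y ≠ j := fun h => hjV (h ▸ hy)
      obtain ⟨ha, hb⟩ := uf_val_in (j := j) hjn hy'.2 h1 h2
      simp only [Function.comp_apply]
      rw [swf_of_ne ha hb]
      exact uf_agree hj hjn (by omega) (by omega) h1 h2
  · -- neither
    have hiff : j ∈ W ↔ j + 1 ∈ W := by
      rw [hjW, hj1W]; exact ⟨fun h => absurd h hjV, fun h => absurd h hnV⟩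
    rw [Finset.image_congr (fun x _ => swf_of_iff hiff x), Finset.image_id', hW]
    apply Finset.image_congr
    intro y hy
    have hy' := Finset.mem_Icc.mp (hV hy)
    exact uf_agree hj hjn (by omega) (by omega) (fun h => hjV (h ▸ hy)) (fun h => hnV (h ▸ hy))

lemma fold_bk {k d n : ℕ} (hn : 0 < n) {V : Finset ℕ} (hV : V ⊆ Finset.Icc 1 n)
    (hcard : V.card = k) :
    ∀ m j, 1 ≤ j → j + m = n →
      (List.range' j m).foldr (fun i acc => bk k d i acc) (tabOf k d V) =
        tabOf k d (V.image (uf n j)) := by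
  intro m
  induction m with
  | zero =>
    intro j hj hjm
    have : V.image (uf n j) = V := by
      have : V.image (uf n j) = V.image id := by
        apply Finset.image_congr
        intro y hy
        have := Finset.mem_Icc.mp (hV hy)
        unfold uf; split_ifs <;> simp <;> omega
      rw [this, Finset.image_id]
    rw [this]
    rfl
  | succ m ih =>
    intro j hj hjm
    rw [List.range'_succ, List.foldr_cons, ih (j+1) (by omega) (by omega),
      bk_tabOf hj (uf_image_card (by omega) (by omega) hV hcard),
      ustep hj (by omega) hV]

lemma shift_eq_image {n : ℕ} (V : Finset ℕ) : shiftSet n V = V.image (fun x => x % n + 1) := rfl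

lemma promo_tabOf {k d n : ℕ} (hn : 0 < n) {V : Finset ℕ} (hV : V ⊆ Finset.Icc 1 n)
    (hcard : V.card = k) : promo k d n (tabOf k d V) = tabOf k d (shiftSet n V) := by
  unfold promo
  have hlist : (List.range (n-1)).map (· + 1) = List.range' 1 (n-1) := by
    rw [List.range'_eq_map_range]
    apply List.map_congr_left
    intro a _
    omega
  rw [hlist, fold_bk hn hV hcard (n-1) 1 le_rfl (by omega)]
  have hset : V.image (uf n 1) = shiftSet n V := by
    rw [shift_eq_image]
    apply Finset.image_congr
    intro y hy
    have hy' := Finset.mem_Icc.mp (hV hy)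
    show uf n 1 y = y % n + 1
    by_cases h : y < n
    · have hm : y % n = y := Nat.mod_eq_of_lt h
      unfold uf; split_ifs <;> omega
    · have hyn : y = n := by omega
      have hm : y % n = 0 := by rw [hyn]; exact Nat.mod_self n
      unfold uf; split_ifs <;> omega
  rw [hset]

lemma normTab_tabOf {k d : ℕ} (V : Finset ℕ) : normTab k d (tabOf k d V) = tabOf k d V := by
  funext r c
  unfold normTab tabOf
  split_ifs <;> rfl

lemma promoN_tabOf {k d n : ℕ} (hn : 0 < n) {V : Finset ℕ} (hV : V ⊆ Finset.Icc 1 n)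
    (hcard : V.card = k) : promoN k d n (tabOf k d V) = tabOf k d (shiftSet n V) := by
  unfold promoN
  rw [promo_tabOf hn hV hcard, normTab_tabOf]

lemma shift_subset {n : ℕ} (hn : 0 < n) (S : Finset ℕ) : shiftSet n S ⊆ Finset.Icc 1 n := by
  intro x hx
  obtain ⟨y, hy, rfl⟩ := Finset.mem_image.mp hx
  have := Nat.mod_lt y hn
  rw [Finset.mem_Icc]
  omega

lemma shift_card {n k : ℕ} (hn : 0 < n) {S : Finset ℕ} (hS : S ⊆ Finset.Icc 1 n)
    (hcard : S.card = k) : (shiftSet n S).card = k := by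
  rw [← hcard]
  apply Finset.card_image_of_injOn
  intro x hx y hy h
  have hx' := Finset.mem_Icc.mp (hS hx)
  have hy' := Finset.mem_Icc.mp (hS hy)
  have h' : x % n + 1 = y % n + 1 := h
  have h1 : x % n = x ∨ (x = n ∧ x % n = 0) := by
    by_cases hlt : x < n
    · exact Or.inl (Nat.mod_eq_of_lt hlt)
    · refine Or.inr ⟨by omega, ?_⟩
      have hxn : x = n := by omega
      rw [hxn, Nat.mod_self]
  have h2 : y % n = y ∨ (y = n ∧ y % n = 0) := by
    by_cases hlt : y < n
    · exact Or.inl (Nat.mod_eq_of_lt hlt)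
    · refine Or.inr ⟨by omega, ?_⟩
      have hyn : y = n := by omega
      rw [hyn, Nat.mod_self]
  omega

lemma promoN_iter {k d n : ℕ} (hn : 0 < n) {V : Finset ℕ} (hV : V ⊆ Finset.Icc 1 n)
    (hcard : V.card = k) :
    ∀ j, (promoN k d n)^[j] (tabOf k d V) = tabOf k d ((shiftSet n)^[j] V) ∧
      (shiftSet n)^[j] V ⊆ Finset.Icc 1 n ∧ ((shiftSet n)^[j] V).card = k := by
  intro j
  induction j with
  | zero => exact ⟨rfl, hV, hcard⟩
  | succ j ih =>
    obtain ⟨h1, h2, h3⟩ := ih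
    rw [Function.iterate_succ_apply', Function.iterate_succ_apply', h1]
    exact ⟨promoN_tabOf hn h2 h3, shift_subset hn _, shift_card hn h2 h3⟩

lemma shift_iter_res {n : ℕ} (hn : 0 < n) {V : Finset ℕ} (hV : V ⊆ Finset.Icc 1 n) :
    ∀ m : ℕ, (shiftSet n)^[m] V = V.image (fun y : ℕ => res n ((y : ℤ) + (m : ℤ))) := by
  intro m
  induction m with
  | zero =>
    have himg : V.image (fun y : ℕ => res n ((y:ℤ) + ((0:ℕ) : ℤ))) = V := by
      have h2 : V.image (fun y : ℕ => res n ((y:ℤ) + ((0:ℕ) : ℤ))) = V.image id := by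
        apply Finset.image_congr
        intro y hy
        have hy' := Finset.mem_Icc.mp (hV hy)
        have h3 := res_eq_self hn (x := (y:ℤ)) (by exact_mod_cast hy'.1) (by exact_mod_cast hy'.2)
        simp only [Nat.cast_zero, add_zero, id]
        omega
      rw [h2, Finset.image_id]
    simpa using himg.symm
  | succ m ih =>
    rw [Function.iterate_succ_apply', ih, shift_eq_image, Finset.image_image]
    apply Finset.image_congr
    intro y hy
    simp only [Function.comp_apply]
    set z := res n ((y : ℤ) + (m:ℤ)) with hz
    have hz' := res_mem hn ((y : ℤ) + (m:ℤ))
    rw [← hz] at hz'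
    have hdvd : (n : ℤ) ∣ ((y : ℤ) + ((m+1:ℕ) : ℤ)) - ((z : ℤ) + 1) := by
      have hmod := res_self_mod hn ((y : ℤ) + (m:ℤ))
      rw [← hz] at hmod
      have heq : ((y : ℤ) + ((m+1:ℕ) : ℤ)) - ((z : ℤ) + 1) = -(((z : ℤ)) - ((y:ℤ) + (m:ℤ))) := by
        push_cast; ring
      rw [heq]
      exact dvd_neg.mpr hmod
    have hres : res n ((y:ℤ) + ((m+1:ℕ) : ℤ)) = res n ((z:ℤ)+1) := res_congr hdvd
    rw [hres]
    by_cases h : z < n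
    · rw [Nat.mod_eq_of_lt h]
      have h5 : (res n ((z:ℤ)+1) : ℤ) = (z:ℤ)+1 :=
        res_eq_self hn (by omega) (by exact_mod_cast h)
      omega
    · have hzn : z = n := by omega
      rw [hzn, Nat.mod_self]
      have h4 : ((n:ℤ)+1) = (1:ℤ) + n := by ring
      have h5 : res n ((n:ℤ)+1) = res n 1 := by rw [h4]; exact res_add_n 1
      have h6 : (res n (1:ℤ) : ℤ) = 1 := res_eq_self hn le_rfl (by exact_mod_cast hn)
      rw [hzn] at *
      omega

lemma shift_iter_n {n : ℕ} (hn : 0 < n) {V : Finset ℕ} (hV : V ⊆ Finset.Icc 1 n) :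
    (shiftSet n)^[n] V = V := by
  rw [shift_iter_res hn hV n]
  have h2 : V.image (fun y : ℕ => res n ((y : ℤ) + (n:ℤ))) = V.image id := by
    apply Finset.image_congr
    intro y hy
    have hy' := Finset.mem_Icc.mp (hV hy)
    have h1 : res n ((y:ℤ) + (n:ℤ)) = res n (y:ℤ) := res_add_n (y:ℤ)
    have h3 : (res n (y:ℤ) : ℤ) = y :=
      res_eq_self hn (by exact_mod_cast hy'.1) (by exact_mod_cast hy'.2)
    simp only [id]
    omega
  rw [h2, Finset.image_id]

open Classical in
noncomputable def Crho (n : ℕ) (f : ℤ → ℤ) (ρ : ℤ → Prop) (x : ℤ) : ℕ :=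
  ((Finset.Icc (x - n) (x - 1)).filter fun u => x ≤ f u ∧ ρ (f u)).card

lemma card_if_erase {α : Type*} [DecidableEq α] (S : Finset α) (v : α) :
    S.card = (S.erase v).card + (if v ∈ S then 1 else 0) := by
  by_cases h : v ∈ S
  · rw [if_pos h, Finset.card_erase_add_one h]
  · rw [if_neg h, Finset.erase_eq_of_notMem h, add_zero]

section Count

variable {n : ℕ} {f : ℤ → ℤ}

lemma f_sub_n (hper : ∀ i, f (i + n) = f i + n) (x : ℤ) : f (x - n) = f x - n := by
  have := hper (x - n)
  rw [show x - n + n = x by ring] at this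
  omega

open Classical in
lemma C_step (hn : 0 < n) (hbij : Function.Bijective f)
    (hper : ∀ i, f (i + n) = f i + n) (hbnd : ∀ i, i ≤ f i ∧ f i ≤ i + n)
    (ρ : ℤ → Prop) (x : ℤ) :
    Crho n f ρ (x + 1) + (if f x ≠ x ∧ ρ x then 1 else 0)
      = Crho n f ρ x + (if f x ≠ x ∧ ρ (f x) then 1 else 0) := by
  classical
  by_cases hfx : f x = x
  · rw [if_neg (by tauto), if_neg (by tauto)]
    unfold Crho
    congr 1
    apply Finset.card_nbij' id id <;> intro u hu <;>
      simp only [Finset.mem_coe, Finset.mem_filter, Finset.mem_Icc, id] at * <;>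
      obtain ⟨⟨h1, h2⟩, h3, h4⟩ := hu
    · -- from S_{x+1} to S_x
      have hne : u ≠ x := fun h => by rw [h, hfx] at h3; omega
      exact ⟨⟨by omega, by omega⟩, by omega, h4⟩
    · -- from S_x to S_{x+1}
      have hfu : f u ≠ x := fun h => by
        have := hbij.1 (h.trans hfx.symm)
        omega
      have hun : u ≠ x - n := fun h => by
        rw [h, f_sub_n hper] at h3
        have := (hbnd x).2
        have hfxn : f x = x + n := by omega
        have : f (x - n) = x := by rw [f_sub_n hper]; omega
        have := hbij.1 (this.trans hfx.symm)
        omega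
      exact ⟨⟨by omega, by omega⟩, by omega, h4⟩
  · have hfx' : x < f x := lt_of_le_of_ne (hbnd x).1 (Ne.symm hfx)
    obtain ⟨u0, hu0⟩ := hbij.2 x
    have hu0x : u0 < x := by
      rcases lt_or_eq_of_le ((hbnd u0).1.trans_eq hu0) with h | h
      · exact h
      · exfalso; apply hfx; rw [← h] at hu0 ⊢; exact hu0
    have hu0n : x - n ≤ u0 := by have := (hbnd u0).2; omega
    set S1 := (Finset.Icc (x + 1 - n) (x + 1 - 1)).filter fun u => x + 1 ≤ f u ∧ ρ (f u)
      with hS1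
    set S0 := (Finset.Icc (x - n) (x - 1)).filter fun u => x ≤ f u ∧ ρ (f u) with hS0
    have herase : S1.erase x = S0.erase u0 := by
      ext u
      simp only [Finset.mem_erase, hS1, hS0, Finset.mem_filter, Finset.mem_Icc]
      constructor
      · rintro ⟨hne, ⟨h1, h2⟩, h3, h4⟩
        have : u ≠ u0 := fun h => by rw [h, hu0] at h3; omega
        exact ⟨this, ⟨by omega, by omega⟩, by omega, h4⟩
      · rintro ⟨hne, ⟨h1, h2⟩, h3, h4⟩
        have hfu : f u ≠ x := fun h => hne (hbij.1 (h.trans hu0.symm))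
        have hun : u ≠ x - n := by
          intro h
          rw [h, f_sub_n hper] at h3
          have hfxn : f x = x + n := by have := (hbnd x).2; omega
          have : f (x - n) = x := by rw [f_sub_n hper]; omega
          exact hne (hbij.1 (this.trans hu0.symm) ▸ h ▸ rfl)
        exact ⟨by omega, ⟨by omega, by omega⟩, by omega, h4⟩
    have hxS1 : x ∈ S1 ↔ ρ (f x) := by
      simp only [hS1, Finset.mem_filter, Finset.mem_Icc]
      constructor
      · rintro ⟨_, _, h⟩; exact h
      · intro h; exact ⟨⟨by omega, by omega⟩, by omega, h⟩
    have hu0S0 : u0 ∈ S0 ↔ ρ x := by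
      simp only [hS0, Finset.mem_filter, Finset.mem_Icc, hu0]
      constructor
      · rintro ⟨_, _, h⟩; exact h
      · intro h; exact ⟨⟨by omega, by omega⟩, by omega, h⟩
    have e1 : Crho n f ρ (x + 1) = (S1.erase x).card + (if ρ (f x) then 1 else 0) := by
      show S1.card = _
      rw [card_if_erase S1 x, if_congr hxS1 rfl rfl]
    have e0 : Crho n f ρ x = (S0.erase u0).card + (if ρ x then 1 else 0) := by
      show S0.card = _
      rw [card_if_erase S0 u0, if_congr hu0S0 rfl rfl]
    rw [e1, e0, herase, if_congr (and_iff_right hfx) rfl rfl,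
      if_congr (and_iff_right hfx) rfl rfl]
    by_cases h1 : ρ x <;> by_cases h2 : ρ (f x) <;> simp [h1, h2]

lemma card_ite_insert {α : Type*} [DecidableEq α] {s : Finset α} {x : α} (hx : x ∉ s)
    (b : Prop) [Decidable b] :
    (if b then insert x s else s).card = s.card + (if b then 1 else 0) := by
  split_ifs with h
  · rw [Finset.card_insert_of_notMem hx]
  · omega

open Classical in
lemma C_teles (hn : 0 < n) (hbij : Function.Bijective f)
    (hper : ∀ i, f (i + n) = f i + n) (hbnd : ∀ i, i ≤ f i ∧ f i ≤ i + n)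
    (ρ : ℤ → Prop) (a : ℤ) : ∀ j : ℕ,
    Crho n f ρ (a + j) + ((Finset.Icc a (a + j - 1)).filter
        fun x => f x ≠ x ∧ ρ x).card
      = Crho n f ρ a + ((Finset.Icc a (a + j - 1)).filter
        fun x => f x ≠ x ∧ ρ (f x)).card := by
  classical
  intro j
  induction j with
  | zero =>
    have : Finset.Icc a (a + (0:ℕ) - 1) = ∅ := by
      apply Finset.Icc_eq_empty; push_cast; omega
    simp [this]
  | succ j ih =>
    have hcast : a + ((j+1:ℕ) : ℤ) = (a + j) + 1 := by push_cast; ring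
    have hIcc : Finset.Icc a (a + (j:ℤ) + 1 - 1) = insert (a + j) (Finset.Icc a (a + j - 1)) := by
      ext u; simp only [Finset.mem_insert, Finset.mem_Icc]; omega
    have hnot : (a + (j:ℤ)) ∉ Finset.Icc a (a + (j:ℤ) - 1) := by
      simp only [Finset.mem_Icc]; omega
    have hstep := C_step hn hbij hper hbnd ρ (a + j)
    rw [hcast, hIcc, Finset.filter_insert, Finset.filter_insert]
    rw [card_ite_insert (fun hm => hnot (Finset.mem_filter.mp hm).1) _,
      card_ite_insert (fun hm => hnot (Finset.mem_filter.mp hm).1) _]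
    omega

open Classical in
lemma C_mono (hn : 0 < n) (hbij : Function.Bijective f)
    (hper : ∀ i, f (i + n) = f i + n) (hbnd : ∀ i, i ≤ f i ∧ f i ≤ i + n)
    (ρ : ℤ → Prop) (hρ : ∀ v, ρ (v + n) ↔ ρ v) (a : ℤ) (t : ℕ) (ht : t ≤ n)
    (hseg : ∀ x : ℤ, a ≤ x → x < a + n → (ρ x ↔ x < a + t)) :
    ∀ b : ℤ, a ≤ b → b ≤ a + n → Crho n f ρ b ≤ Crho n f ρ a := by
  intro b hab hba
  obtain ⟨j, hj⟩ : ∃ j : ℕ, b = a + j := ⟨(b - a).toNat, by omega⟩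
  have hjn : (j : ℤ) ≤ n := by omega
  have hteles := C_teles hn hbij hper hbnd ρ a j
  rw [← hj] at hteles
  have hNM : ((Finset.Icc a (b - 1)).filter fun x => f x ≠ x ∧ ρ (f x)).card ≤
      ((Finset.Icc a (b - 1)).filter fun x => f x ≠ x ∧ ρ x).card := by
    by_cases hb : b ≤ a + t
    · apply Finset.card_le_card
      intro x hx
      obtain ⟨hx1, hx2, hx3⟩ := Finset.mem_filter.mp hx
      have hx1' := Finset.mem_Icc.mp hx1
      refine Finset.mem_filter.mpr ⟨hx1, hx2, ?_⟩
      rw [hseg x (by omega) (by omega)]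
      omega
    · apply Finset.card_le_card_of_injOn (fun x => if f x < a + n then f x else f x - n)
      · intro x hx
        obtain ⟨hx1, hx2, hx3⟩ := Finset.mem_filter.mp hx
        have hx1' := Finset.mem_Icc.mp hx1
        have hfgt : x < f x := lt_of_le_of_ne (hbnd x).1 (Ne.symm hx2)
        have hfle : f x ≤ x + n := (hbnd x).2
        by_cases hcase : f x < a + n
        · dsimp only; rw [if_pos hcase]
          have hρw : ρ (f x) := hx3
          have hw : f x < a + t := by rw [← hseg (f x) (by omega) hcase]; exact hρw
          refine Finset.mem_filter.mpr ⟨Finset.mem_Icc.mpr ⟨by omega, by omega⟩, ?_, hρw⟩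
          intro hcon
          exact hx2 (hbij.1 (hcon : f (f x) = f x))
        · dsimp only; rw [if_neg hcase]
          have hρw : ρ (f x - n) := by
            rw [← hρ (f x - n), show f x - n + n = f x by ring]
            exact hx3
          have hw1 : a ≤ f x - n := by omega
          have hw2 : f x - n < a + n := by omega
          have hw : f x - n < a + t := by rw [← hseg _ hw1 hw2]; exact hρw
          refine Finset.mem_filter.mpr ⟨Finset.mem_Icc.mpr ⟨hw1, by omega⟩, ?_, hρw⟩
          intro hcon
          have : f (f x) = f x := by
            have h2 := hper (f x - n)
            rw [show f x - n + n = f x by ring] at h2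
            rw [hcon] at h2
            omega
          exact hx2 (hbij.1 this)
      · intro x1 hx1 x2 hx2 heq
        simp only at heq
        simp only [Finset.coe_filter, Set.mem_setOf_eq] at hx1 hx2
        obtain ⟨hm1, hne1, _⟩ := hx1
        obtain ⟨hm2, hne2, _⟩ := hx2
        have hm1' := Finset.mem_Icc.mp hm1
        have hm2' := Finset.mem_Icc.mp hm2
        by_cases hc1 : f x1 < a + n <;> by_cases hc2 : f x2 < a + n
        · rw [if_pos hc1, if_pos hc2] at heq
          exact hbij.1 heq
        · rw [if_pos hc1, if_neg hc2] at heq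
          exfalso
          have : f x2 = f x1 + n := by omega
          rw [← hper x1] at this
          have := hbij.1 this
          omega
        · rw [if_neg hc1, if_pos hc2] at heq
          exfalso
          have : f x1 = f x2 + n := by omega
          rw [← hper x2] at this
          have := hbij.1 this
          omega
        · rw [if_neg hc1, if_neg hc2] at heq
          exact hbij.1 (by omega : f x1 = f x2)
  omega

open Classical in
lemma C_per (hn : 0 < n) (hper : ∀ i, f (i + n) = f i + n)
    (ρ : ℤ → Prop) (hρ : ∀ v, ρ (v + n) ↔ ρ v) (x : ℤ) :
    Crho n f ρ (x + n) = Crho n f ρ x := by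
  unfold Crho
  apply Finset.card_nbij' (fun u : ℤ => u - (n:ℤ)) (fun u : ℤ => u + (n:ℤ)) <;> intro u hu <;>
    simp only [Finset.mem_coe, Finset.mem_filter, Finset.mem_Icc] at * <;>
    obtain ⟨⟨h1, h2⟩, h3, h4⟩ := hu
  · have hf : f (u - n) = f u - n := f_sub_n hper u
    refine ⟨⟨by omega, by omega⟩, by omega, ?_⟩
    rw [hf, ← hρ (f u - n), show f u - n + n = f u by ring]
    exact h4
  · have hf : f (u + n) = f u + n := hper u
    refine ⟨⟨by omega, by omega⟩, by omega, ?_⟩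
    rw [hf, hρ (f u)]
    exact h4
  · omega
  · omega

lemma step_const {F : ℤ → ℕ} (h : ∀ x, F (x + 1) = F x) : ∀ x, F x = F 0 := by
  intro x
  induction x using Int.induction_on with
  | zero => rfl
  | succ i ih => rw [h i]; exact ih
  | pred i ih =>
    have h2 := h (-(i : ℤ) - 1)
    rw [show -(i:ℤ) - 1 + 1 = -(i:ℤ) by ring] at h2
    rw [← h2]; exact ih

open Classical in
lemma C_true_const (hn : 0 < n) (hbij : Function.Bijective f)
    (hper : ∀ i, f (i + n) = f i + n) (hbnd : ∀ i, i ≤ f i ∧ f i ≤ i + n) :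
    ∀ x, Crho n f (fun _ => True) x = Crho n f (fun _ => True) 0 := by
  apply step_const
  intro x
  have := C_step hn hbij hper hbnd (fun _ => True) x
  simpa using this

lemma window_card (hn : 0 < n) (p : ℤ → Prop) [DecidablePred p] (hp : ∀ x, p (x + n) ↔ p x) :
    ∀ c : ℤ, ((Finset.Icc (c + 1) (c + n)).filter p).card
      = ((Finset.Icc 1 (n : ℤ)).filter p).card := by
  have hstep : ∀ c : ℤ, ((Finset.Icc (c + 1 + 1) (c + 1 + n)).filter p).card
      = ((Finset.Icc (c + 1) (c + n)).filter p).card := by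
    intro c
    have h1 : Finset.Icc (c + 1 + 1) (c + 1 + n) = insert (c + 1 + n) (Finset.Icc (c + 2) (c + n)) := by
      ext u; simp only [Finset.mem_insert, Finset.mem_Icc]; omega
    have h2 : Finset.Icc (c + 1) (c + n) = insert (c + 1) (Finset.Icc (c + 2) (c + n)) := by
      ext u; simp only [Finset.mem_insert, Finset.mem_Icc]; omega
    have hn1 : (c + 1 + n) ∉ Finset.Icc (c + 2) (c + n) := by
      simp only [Finset.mem_Icc]; omega
    have hn2 : (c + 1) ∉ Finset.Icc (c + 2) (c + n) := by
      simp only [Finset.mem_Icc]; omega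
    rw [h1, h2, Finset.filter_insert, Finset.filter_insert,
      card_ite_insert (fun hm => hn1 (Finset.mem_filter.mp hm).1) _,
      card_ite_insert (fun hm => hn2 (Finset.mem_filter.mp hm).1) _,
      if_congr (hp (c + 1)) rfl rfl]
  intro c
  have := step_const (F := fun c => ((Finset.Icc (c + 1) (c + n)).filter p).card)
    (by intro x; exact hstep x) c
  rw [this]
  norm_num

lemma sum_Icc_id : ∀ m : ℕ, (∑ i ∈ Finset.Icc (1:ℤ) (m:ℤ), i) = ((m+1).choose 2 : ℤ) := by
  intro m
  induction m with
  | zero => simp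
  | succ m ih =>
    have hIcc : Finset.Icc (1:ℤ) ((m+1:ℕ):ℤ) = insert ((m+1:ℕ):ℤ) (Finset.Icc (1:ℤ) (m:ℤ)) := by
      ext u; simp only [Finset.mem_insert, Finset.mem_Icc]; push_cast; omega
    have hnot : ((m+1:ℕ):ℤ) ∉ Finset.Icc (1:ℤ) (m:ℤ) := by
      simp only [Finset.mem_Icc]; push_cast; omega
    rw [hIcc, Finset.sum_insert hnot, ih]
    have hch : (m+2).choose 2 = (m+1).choose 1 + (m+1).choose 2 := Nat.choose_succ_succ (m+1) 1
    rw [Nat.choose_one_right] at hch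
    push_cast [hch]
    ring

open Classical in
lemma C_true_eq_k {k : ℕ} (hn : 0 < n) (hf : IsBAP k n f) :
    ∀ a : ℤ, Crho n f (fun _ => True) a = k := by
  obtain ⟨hbij, hper, hsum, hbnd⟩ := hf
  have hconst := C_true_const hn hbij hper hbnd
  suffices h0 : Crho n f (fun _ => True) 0 = k by
    intro a; rw [hconst a, h0]
  set I := Finset.Icc (1:ℤ) (n:ℤ) with hI
  have hcardIcc : I.card = n := by rw [hI, Int.card_Icc]; omega
  have hsum1 : ∑ a ∈ I, Crho n f (fun _ => True) a
      = n * Crho n f (fun _ => True) 0 := by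
    rw [Finset.sum_congr rfl (fun a _ => hconst a), Finset.sum_const, hcardIcc, smul_eq_mul]
  have hCa : ∀ a : ℤ, Crho n f (fun _ => True) a
      = ∑ jj ∈ I, (if (jj:ℤ) ≤ f (a - jj) - (a - jj) then 1 else 0) := by
    intro a
    unfold Crho
    rw [Finset.card_filter]
    apply Finset.sum_nbij' (fun u : ℤ => a - u) (fun jj : ℤ => a - jj)
    · intro u hu
      have := Finset.mem_Icc.mp hu
      rw [hI, Finset.mem_Icc]; omega
    · intro jj hjj
      rw [hI] at hjj
      have := Finset.mem_Icc.mp hjj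
      rw [Finset.mem_Icc]; omega
    · intro u _; ring
    · intro jj _; ring
    · intro u hu
      have := Finset.mem_Icc.mp hu
      have hru : a - (a - u) = u := by ring
      by_cases hcase : (a:ℤ) ≤ f u
      · rw [if_pos ⟨hcase, trivial⟩, if_pos (by rw [hru]; omega)]
      · rw [if_neg (by tauto), if_neg (by rw [hru]; omega)]
  have hjfix : ∀ jj : ℤ, (∑ a ∈ I, if (jj:ℤ) ≤ f (a - jj) - (a - jj) then 1 else 0)
      = ((I.filter (fun x => jj ≤ f x - x)).card : ℕ) := by
    intro jj
    have h1 : (∑ a ∈ I, if (jj:ℤ) ≤ f (a - jj) - (a - jj) then 1 else 0)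
        = ∑ x ∈ Finset.Icc (1 - jj) ((n:ℤ) - jj), (if jj ≤ f x - x then (1:ℕ) else 0) := by
      apply Finset.sum_nbij' (fun a : ℤ => a - jj) (fun x : ℤ => x + jj)
      · intro a ha
        rw [hI] at ha
        have := Finset.mem_Icc.mp ha
        rw [Finset.mem_Icc]; omega
      · intro x hx
        have := Finset.mem_Icc.mp hx
        rw [hI, Finset.mem_Icc]; omega
      · intro a _; ring
      · intro x _; ring
      · intro a _; rfl
    have hper' : ∀ x : ℤ, (jj ≤ f (x + n) - (x + n)) ↔ (jj ≤ f x - x) := by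
      intro x; rw [hper x]; constructor <;> intro <;> omega
    have h2 := window_card hn (fun x => jj ≤ f x - x) hper' (-jj)
    have h3 : Finset.Icc (1 - jj) ((n:ℤ) - jj) = Finset.Icc (-jj + 1) (-jj + n) := by
      congr 1 <;> ring
    rw [h1, hI, ← h2, ← h3, Finset.card_filter]
  have hxfix : ∀ x : ℤ, 1 ≤ x → x ≤ (n:ℤ) →
      ((I.filter (fun jj => jj ≤ f x - x)).card) = (f x - x).toNat := by
    intro x h1 h2
    have hfe : I.filter (fun jj => jj ≤ f x - x) = Finset.Icc 1 (f x - x) := by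
      have hb := (hbnd x).2
      ext u
      rw [hI]
      simp only [Finset.mem_filter, Finset.mem_Icc]
      omega
    rw [hfe, Int.card_Icc]
    congr 1; ring
  have hdouble : (∑ jj ∈ I, ((I.filter (fun x => jj ≤ f x - x)).card))
      = ∑ x ∈ I, (f x - x).toNat := by
    have e1 : ∀ jj : ℤ, ((I.filter (fun x => jj ≤ f x - x)).card)
        = ∑ x ∈ I, if jj ≤ f x - x then (1:ℕ) else 0 := fun jj => Finset.card_filter _ _
    rw [Finset.sum_congr rfl (fun jj _ => e1 jj), Finset.sum_comm]
    apply Finset.sum_congr rfl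
    intro x hx
    rw [hI] at hx
    have hx' := Finset.mem_Icc.mp hx
    rw [← Finset.card_filter]
    exact hxfix x hx'.1 hx'.2
  have hNat : n * Crho n f (fun _ => True) 0 = ∑ x ∈ I, (f x - x).toNat := by
    rw [← hsum1, Finset.sum_congr rfl (fun a _ => hCa a), Finset.sum_comm]
    rw [Finset.sum_congr rfl (fun jj _ => hjfix jj), hdouble]
  have hInt : ((n : ℤ)) * (Crho n f (fun _ => True) 0 : ℤ) = (k : ℤ) * n := by
    have hc1 : ((n * Crho n f (fun _ => True) 0 : ℕ) : ℤ)
        = ∑ x ∈ I, ((f x - x).toNat : ℤ) := by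
      rw [hNat]; push_cast; rfl
    have hc2 : (∑ x ∈ I, ((f x - x).toNat : ℤ)) = ∑ x ∈ I, (f x - x) := by
      apply Finset.sum_congr rfl
      intro x hx
      exact Int.toNat_of_nonneg (by have := (hbnd x).1; omega)
    have hc3 : (∑ x ∈ I, (f x - x)) = (k : ℤ) * n := by
      rw [Finset.sum_sub_distrib]
      rw [hI] at *
      rw [hsum, sum_Icc_id n]
      ring
    push_cast at hc1
    rw [hc1, hc2, hc3]
  have hn0 : ((n:ℤ)) ≠ 0 := by positivity
  have := mul_left_cancel₀ hn0 (hInt.trans (by ring))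
  exact_mod_cast this

lemma neck_subset (hn : 0 < n) (a : ℕ) : necklaceOf n f a ⊆ Finset.Icc 1 n := by
  intro x hx
  obtain ⟨b, _, rfl⟩ := Finset.mem_image.mp hx
  rw [Finset.mem_Icc]
  exact res_mem hn _

lemma neck_count (hn : 0 < n) (hbij : Function.Bijective f)
    (hbnd : ∀ i, i ≤ f i ∧ f i ≤ i + n) (a : ℕ) (q : ℕ → Prop) [DecidablePred q] :
    ((necklaceOf n f a).filter q).card
      = Crho n f (fun v => q (res n v)) (a : ℤ) := by
  unfold necklaceOf Crho
  rw [Finset.filter_image]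
  have hinj : Set.InjOn (fun b => res n (f b))
      ↑(((Finset.Icc ((a:ℤ) - n) ((a:ℤ) - 1)).filter fun b => (a:ℤ) ≤ f b).filter
        fun b => q (res n (f b))) := by
    intro b1 hb1 b2 hb2 heq
    simp only [Finset.coe_filter, Set.mem_setOf_eq, Finset.mem_filter, Finset.mem_Icc] at hb1 hb2
    obtain ⟨⟨⟨h1, h2⟩, h3⟩, -⟩ := hb1
    obtain ⟨⟨⟨h4, h5⟩, h6⟩, -⟩ := hb2
    have hf1 := (hbnd b1).2
    have hf2 := (hbnd b2).2
    simp only at heq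
    exact hbij.1 (res_inj_window hn (c := (a:ℤ)) (by omega) (by omega) (by omega) (by omega) heq)
  rw [Finset.card_image_of_injOn hinj, Finset.filter_filter]
  congr 1
  ext u
  simp only [Finset.mem_filter]

lemma gale {k : ℕ} {A B : Finset ℕ} (hA : A.card = k) (hB : B.card = k)
    (h : ∀ t : ℕ, (B.filter (· ≤ t)).card ≤ (A.filter (· ≤ t)).card) :
    ∀ r, r < k → sv A r ≤ sv B r := by
  intro r hr
  by_contra hlt
  push_neg at hlt
  set t := sv B r with ht
  have hBcard : r + 1 ≤ (B.filter (· ≤ t)).card := by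
    have hsub : (Finset.range (r+1)).image (sv B) ⊆ B.filter (· ≤ t) := by
      intro x hx
      obtain ⟨j, hj, rfl⟩ := Finset.mem_image.mp hx
      have hjr : j < r + 1 := Finset.mem_range.mp hj
      refine Finset.mem_filter.mpr ⟨sv_mem hB (by omega), ?_⟩
      rcases Nat.lt_or_ge j r with h' | h'
      · exact le_of_lt (sv_strictMono hB h' hr)
      · have hjr' : j = r := by omega
        rw [hjr']
    have hcardim : ((Finset.range (r+1)).image (sv B)).card = r + 1 := by
      rw [Finset.card_image_of_injOn, Finset.card_range]
      intro x hx y hy hxy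
      simp only [Finset.coe_range, Set.mem_Iio] at hx hy
      by_contra hne
      rcases Nat.lt_or_ge x y with h' | h'
      · have := sv_strictMono hB h' (by omega); omega
      · have hyx : y < x := by omega
        have := sv_strictMono hB hyx (by omega); omega
    calc r + 1 = _ := hcardim.symm
    _ ≤ _ := Finset.card_le_card hsub
  have hAcard := le_trans hBcard (h t)
  have hsub2 : A.filter (· ≤ t) ⊆ (Finset.range r).image (sv A) := by
    intro x hx
    obtain ⟨hxA, hxt⟩ := Finset.mem_filter.mp hx
    obtain ⟨j, hj, hji⟩ := sv_surj hA hxA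
    refine Finset.mem_image.mpr ⟨j, Finset.mem_range.mpr ?_, hji⟩
    by_contra hge
    push_neg at hge
    have hle : sv A r ≤ sv A j := by
      rcases Nat.lt_or_ge r j with h' | h'
      · exact le_of_lt (sv_strictMono hA h' hj)
      · have : r = j := by omega
        rw [this]
    omega
  have hfin : (A.filter (· ≤ t)).card ≤ r := le_trans (Finset.card_le_card hsub2)
    (le_trans Finset.card_image_le (by rw [Finset.card_range]))
  omega

lemma tabOf_SSYT {k d : ℕ} {V : Finset ℕ} (hV : V ⊆ Finset.Icc 1 n)
    (hcard : V.card = k) : IsSSYT k d n (tabOf k d V) := by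
  refine ⟨?_, ?_, ?_⟩
  · intro r c hr hc
    rw [tabOf_pos hr hc]
    exact Finset.mem_Icc.mp (hV (sv_mem hcard hr))
  · intro r c hr hc
    rw [tabOf_pos hr (by omega), tabOf_pos hr (by omega)]
  · intro r c hr hc
    rw [tabOf_pos (by omega) hc, tabOf_pos (by omega) hc]
    exact sv_strictMono hcard (by omega) hr

lemma shift_iter_inv {k : ℕ} (hn : 0 < n) {V : Finset ℕ} (hV : V ⊆ Finset.Icc 1 n)
    (hcard : V.card = k) (j : ℕ) :
    (shiftSet n)^[j] V ⊆ Finset.Icc 1 n ∧ ((shiftSet n)^[j] V).card = k := by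
  induction j with
  | zero => exact ⟨hV, hcard⟩
  | succ j ih =>
    rw [Function.iterate_succ_apply']
    exact ⟨shift_subset hn _, shift_card hn ih.1 ih.2⟩

open Classical in
lemma shifted_count (hn : 0 < n) (hbij : Function.Bijective f)
    (hbnd : ∀ i, i ≤ f i ∧ f i ≤ i + n) (x m t : ℕ) :
    (((shiftSet n)^[m] (necklaceOf n f x)).filter (· ≤ t)).card
      = Crho n f (fun v => res n (v + m) ≤ t) (x : ℤ) := by
  rw [shift_iter_res hn (neck_subset hn x) m, Finset.filter_image]
  rw [Finset.card_image_of_injOn]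
  · have hq := neck_count hn hbij hbnd x (fun y => res n ((y:ℤ) + m) ≤ t)
    rw [hq]
    have hfe : (fun v => res n (((res n v : ℕ) : ℤ) + m) ≤ t) = (fun v => res n (v + m) ≤ t) := by
      funext v
      have : res n (((res n v : ℕ) : ℤ) + m) = res n (v + m) := by
        apply res_congr
        have := res_self_mod hn v
        have heq : (((res n v : ℕ) : ℤ) + m) - (v + m) = ((res n v : ℕ) : ℤ) - v := by ring
        rw [heq]
        exact this
      rw [this]
    rw [hfe]
  · intro y1 hy1 y2 hy2 heq
    simp only [Finset.coe_filter, Set.mem_setOf_eq] at hy1 hy2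
    have h1 := Finset.mem_Icc.mp (neck_subset hn x hy1.1)
    have h2 := Finset.mem_Icc.mp (neck_subset hn x hy2.1)
    simp only at heq
    have := res_inj_window hn (c := (1:ℤ) + m) (x := (y1:ℤ) + m) (y := (y2:ℤ) + m)
      (by omega) (by omega) (by omega) (by omega) heq
    omega

open Classical in
lemma main_compare {k : ℕ} (hn : 0 < n) (hf : IsBAP k n f) {a e : ℕ}
    (ha : 1 ≤ a) (han : a ≤ n) (he : 1 ≤ e) (hen : e ≤ n) :
    ∀ r, r < k →
      sv ((shiftSet n)^[n + 1 - a] (necklaceOf n f a)) r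
        ≤ sv ((shiftSet n)^[n + 1 - a] (necklaceOf n f e)) r := by
  obtain ⟨hbij, hper, hsum, hbnd⟩ := hf
  have hNcard : ∀ x : ℕ, (necklaceOf n f x).card = k := by
    intro x
    have h1 : (necklaceOf n f x).filter (fun _ => True) = necklaceOf n f x :=
      Finset.filter_true_of_mem (fun _ _ => trivial)
    have h2 := neck_count hn hbij hbnd x (fun _ => True)
    rw [h1] at h2
    rw [h2]
    exact C_true_eq_k hn ⟨hbij, hper, hsum, hbnd⟩ (x:ℤ)
  set m := n + 1 - a with hm
  apply gale (shift_iter_inv hn (neck_subset hn a) (hNcard a) m).2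
    (shift_iter_inv hn (neck_subset hn e) (hNcard e) m).2
  intro t
  by_cases htn : n ≤ t
  · have hful : ∀ x : ℕ, (((shiftSet n)^[m] (necklaceOf n f x)).filter (· ≤ t))
        = (shiftSet n)^[m] (necklaceOf n f x) := by
      intro x
      apply Finset.filter_true_of_mem
      intro y hy
      have := Finset.mem_Icc.mp
        ((shift_iter_inv hn (neck_subset hn x) (hNcard x) m).1 hy)
      omega
    rw [hful a, hful e, (shift_iter_inv hn (neck_subset hn a) (hNcard a) m).2,
      (shift_iter_inv hn (neck_subset hn e) (hNcard e) m).2]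
  · push_neg at htn
    rw [shifted_count hn hbij hbnd a m t, shifted_count hn hbij hbnd e m t]
    set ρ : ℤ → Prop := fun v => res n (v + m) ≤ t with hρ
    have hρper : ∀ v, ρ (v + n) ↔ ρ v := by
      intro v
      rw [hρ]
      simp only
      rw [show v + (n:ℤ) + m = (v + m) + n by ring, res_add_n (v + m)]
    have hseg : ∀ x : ℤ, (a:ℤ) ≤ x → x < a + n → (ρ x ↔ x < (a:ℤ) + t) := by
      intro x hx1 hx2
      have hmz : (m : ℤ) = (n:ℤ) + 1 - a := by omega
      have h1 : x + m = (x - a + 1) + n := by rw [hmz]; ring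
      have h2 : res n (x + m) = res n (x - a + 1) := by rw [h1]; exact res_add_n _
      have h3 : (res n (x - a + 1) : ℤ) = x - a + 1 := res_eq_self hn (by omega) (by omega)
      rw [hρ]
      simp only
      rw [h2]
      omega
    by_cases hae : (a:ℤ) ≤ (e:ℤ)
    · exact C_mono hn hbij hper hbnd ρ hρper (a:ℤ) t (by omega) hseg (e:ℤ) hae (by omega)
    · push_neg at hae
      have hper' := C_per hn hper ρ hρper (e:ℤ)
      rw [← hper']
      exact C_mono hn hbij hper hbnd ρ hρper (a:ℤ) t (by omega) hseg ((e:ℤ) + n)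
        (by omega) (by omega)

lemma neck_card {k : ℕ} (hn : 0 < n) (hf : IsBAP k n f) :
    ∀ x : ℕ, (necklaceOf n f x).card = k := by
  obtain ⟨hbij, hper, hsum, hbnd⟩ := hf
  intro x
  have h1 : (necklaceOf n f x).filter (fun _ => True) = necklaceOf n f x :=
    Finset.filter_true_of_mem (fun _ _ => trivial)
  have h2 := neck_count hn hbij hbnd x (fun _ => True)
  rw [h1] at h2
  rw [h2]
  exact C_true_eq_k hn ⟨hbij, hper, hsum, hbnd⟩ (x:ℤ)

lemma main_mem {k d : ℕ} (hn : 0 < n) (hf : IsBAP k n f) (e : ℕ)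
    (he : e ∈ Finset.Icc 1 n) :
    tabOf k d (necklaceOf n f e) ∈ cyclicDemazure k d n f := by
  obtain ⟨he1, he2⟩ := Finset.mem_Icc.mp he
  have hNcard := neck_card hn hf
  obtain ⟨hbij, hper, hsum, hbnd⟩ := hf
  unfold cyclicDemazure
  simp only [Set.mem_iInter]
  intro a ha
  obtain ⟨ha1, ha2⟩ := Finset.mem_Icc.mp ha
  have hsub := (shift_iter_inv hn (neck_subset hn e) (hNcard e) (n+1-a)).1
  have hcard := (shift_iter_inv hn (neck_subset hn e) (hNcard e) (n+1-a)).2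
  refine ⟨tabOf k d ((shiftSet n)^[n+1-a] (necklaceOf n f e)), ?_, ?_⟩
  · refine ⟨tabOf_SSYT hsub hcard, ?_, ?_⟩
    · intro r c hr hc
      rw [tabOf_pos hr hc, tabOf_pos hr hc]
      exact main_compare hn ⟨hbij, hper, hsum, hbnd⟩ ha1 ha2 he1 he2 r hr
    · intro r c h
      exact tabOf_neg h
  · rw [(promoN_iter hn hsub hcard (a-1)).1]
    have h2 : (shiftSet n)^[a-1] ((shiftSet n)^[n+1-a] (necklaceOf n f e))
        = necklaceOf n f e := by
      rw [← Function.iterate_add_apply]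
      rw [show (a-1) + (n+1-a) = n from by omega]
      exact shift_iter_n hn (neck_subset hn e)
    rw [h2]

end Count


/-- For any `(k,n)`-bounded affine permutation `f` and `d ≥ 1`, the cyclic Demazure
crystal `B_f(dω_k)` contains the tableaux `T_{I_1},…,T_{I_n}` associated to the
Grassmann necklace of `f`; in particular it is nonempty. -/
theorem stmt_10 (k d n : ℕ) (hn : 0 < n) (hd : 1 ≤ d) (f : ℤ → ℤ) (hf : IsBAP k n f) :
    (∀ a ∈ Finset.Icc 1 n, tabOf k d (necklaceOf n f a) ∈ cyclicDemazure k d n f) ∧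
    (cyclicDemazure k d n f).Nonempty := by
  constructor
  · intro a ha
    exact main_mem hn hf a ha
  · exact ⟨tabOf k d (necklaceOf n f 1), main_mem hn hf 1 (Finset.mem_Icc.mpr ⟨le_rfl, hn⟩)⟩
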